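/- arXiv:1402.3901 — 3 statements merged into one kernel-verified Lean document; each statement's English description precedes it below -/
import Mathlib

section
/- Solutions of Heine's equation at infinity: Let q ∈ ℂ with 0 < |q| < 1 and let a, b, c ∈ ℂ* with aq/b ∉ {q^{−m} : m ≥ 0}. Define y(x) = (θ_q(ax)/θ_q(x)) · ₂φ₁(a, aq/c; aq/b; q, cq/(abx)). Then for every x ∈ ℂ with |x| > |c/(abq)| and x ∉ −q^ℤ: (c − abqx)·y(q²x) − ((c+q) − (a+b)qx)·y(qx) + q(1−x)·y(x) = 0. -/
open scoped BigOperators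

/-- The finite q-Pochhammer symbol `(a;q)_n` for `n : ℕ`. -/
noncomputable def qPochN (q a : ℂ) (n : ℕ) : ℂ :=
  ∏ k ∈ Finset.range n, (1 - a * q ^ k)

/-- The infinite q-Pochhammer symbol `(a;q)_∞`. -/
noncomputable def qPochInf (q a : ℂ) : ℂ :=
  ∏' k : ℕ, (1 - a * q ^ k)

/-- The bilateral q-Pochhammer symbol `(a;q)_n` for `n : ℤ`. -/
noncomputable def qPochZ (q a : ℂ) (n : ℤ) : ℂ :=
  if 0 ≤ n then ∏ k ∈ Finset.range n.toNat, (1 - a * q ^ k)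
  else (∏ k ∈ Finset.range (-n).toNat, (1 - a * q ^ (-((k : ℤ) + 1))))⁻¹

/-- The Jacobi theta function `θ_q(x) = ∑_{n ∈ ℤ} q^{n(n-1)/2} x^n`. -/
noncomputable def theta (q x : ℂ) : ℂ :=
  ∑' n : ℤ, q ^ (n * (n - 1) / 2) * x ^ n


/-- Heine's basic hypergeometric series `₂φ₁(a,b;c;q,x)`. -/
noncomputable def phi21 (q a b c x : ℂ) : ℂ :=
  ∑' n : ℕ, qPochN q a n * qPochN q b n / (qPochN q c n * qPochN q q n) * x ^ n

lemma theta_q_mul (q x : ℂ) (hq : q ≠ 0) (hx : x ≠ 0) :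
    theta q (q * x) = x⁻¹ * theta q x := by
  have key : ∀ n : ℤ, q ^ (n * (n - 1) / 2) * (q * x) ^ n
      = q ^ ((n + 1) * ((n + 1) - 1) / 2) * x ^ (n + 1 - 1) := by
    intro n
    have hev : Even ((n - 1) * (n - 1 + 1)) := Int.even_mul_succ_self (n - 1)
    obtain ⟨k, hk⟩ := hev
    have hk' : n * (n - 1) = 2 * k := by linarith [hk]
    have e1 : n * (n - 1) / 2 = k := by rw [hk']; exact Int.mul_ediv_cancel_left _ two_ne_zero
    have e2 : (n + 1) * (n + 1 - 1) / 2 = k + n := by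
      have : (n + 1) * (n + 1 - 1) = 2 * (k + n) := by
        rw [show (n+1)*(n+1-1) = n*(n-1) + 2*n by ring, hk']; ring
      rw [this]; exact Int.mul_ediv_cancel_left _ two_ne_zero
    rw [e1, e2, mul_zpow, show n + 1 - 1 = n by ring, zpow_add₀ hq]
    ring
  have hre : (∑' n : ℤ, q ^ ((n + 1) * ((n + 1) - 1) / 2) * x ^ (n + 1 - 1))
      = ∑' m : ℤ, q ^ (m * (m - 1) / 2) * x ^ (m - 1) :=
    (Equiv.addRight (1 : ℤ)).tsum_eq (fun m => q ^ (m * (m - 1) / 2) * x ^ (m - 1))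
  calc theta q (q * x) = ∑' n : ℤ, q ^ ((n + 1) * ((n + 1) - 1) / 2) * x ^ (n + 1 - 1) :=
        tsum_congr key
    _ = ∑' m : ℤ, q ^ (m * (m - 1) / 2) * x ^ (m - 1) := hre
    _ = ∑' m : ℤ, x⁻¹ * (q ^ (m * (m - 1) / 2) * x ^ m) := by
        refine tsum_congr fun m => ?_
        rw [zpow_sub_one₀ hx]; ring
    _ = x⁻¹ * theta q x := tsum_mul_left

lemma theta_ratio (q a x : ℂ) (hq : q ≠ 0) (ha : a ≠ 0) (hx : x ≠ 0) :
    theta q (a * (q * x)) / theta q (q * x) = a⁻¹ * (theta q (a * x) / theta q x) := by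
  have h1 : theta q (a * (q * x)) = (a * x)⁻¹ * theta q (a * x) := by
    rw [show a * (q * x) = q * (a * x) by ring]
    exact theta_q_mul q (a * x) hq (mul_ne_zero ha hx)
  have h2 : theta q (q * x) = x⁻¹ * theta q x := theta_q_mul q x hq hx
  rw [h1, h2, mul_inv,
    show a⁻¹ * x⁻¹ * theta q (a * x) = x⁻¹ * (a⁻¹ * theta q (a * x)) by ring,
    mul_div_mul_left _ _ (inv_ne_zero hx), mul_div_assoc]

set_option maxHeartbeats 2000000 in
/-- The function `y(x) = (θ_q(ax)/θ_q(x)) ₂φ₁(a, aq/c; aq/b; q, cq/(abx))` solves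
Heine's q-difference equation near infinity. -/
theorem heine_solution_at_infinity (q a b c : ℂ)
    (hq0 : 0 < ‖q‖) (hq1 : ‖q‖ < 1)
    (ha0 : a ≠ 0) (hb0 : b ≠ 0) (hc0 : c ≠ 0)
    (hab : ∀ m : ℕ, a * q / b ≠ q ^ (-(m : ℤ))) :
    ∀ x : ℂ, ‖c / (a * b * q)‖ < ‖x‖ → (∀ k : ℤ, x ≠ -q ^ k) →
      (c - a * b * q * x) *
          ((theta q (a * (q ^ 2 * x)) / theta q (q ^ 2 * x)) *
            phi21 q a (a * q / c) (a * q / b) (c * q / (a * b * (q ^ 2 * x))))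
        - ((c + q) - (a + b) * q * x) *
          ((theta q (a * (q * x)) / theta q (q * x)) *
            phi21 q a (a * q / c) (a * q / b) (c * q / (a * b * (q * x))))
        + q * (1 - x) *
          ((theta q (a * x) / theta q x) *
            phi21 q a (a * q / c) (a * q / b) (c * q / (a * b * x))) = 0 := by
  intro x hx _
  have hq : q ≠ 0 := by
    intro h; rw [h] at hq0; simp at hq0
  have hx0 : x ≠ 0 := by
    have hpos : 0 < ‖x‖ := lt_of_le_of_lt (norm_nonneg _) hx
    intro h; rw [h] at hpos; simp at hpos
  -- nonvanishing of factors
  have hfb : ∀ k : ℕ, (1 : ℂ) - a * q / b * q ^ k ≠ 0 := by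
    intro k h0
    have h1 : a * q / b * q ^ k = 1 := by linear_combination -h0
    exact hab k (by rw [zpow_neg, zpow_natCast]; exact eq_inv_of_mul_eq_one_left h1)
  have hfq : ∀ k : ℕ, (1 : ℂ) - q * q ^ k ≠ 0 := by
    intro k h0
    have h1 : q * q ^ k = 1 := by linear_combination -h0
    have : ‖q * q ^ k‖ < 1 := by
      rw [norm_mul, norm_pow]
      calc ‖q‖ * ‖q‖ ^ k ≤ ‖q‖ * 1 := by
            exact mul_le_mul_of_nonneg_left (pow_le_one₀ (norm_nonneg q) hq1.le)
              (norm_nonneg q)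
        _ < 1 := by rw [mul_one]; exact hq1
    rw [h1] at this; simp at this
  have hdb : ∀ n : ℕ, qPochN q (a * q / b) n ≠ 0 := fun n =>
    Finset.prod_ne_zero_iff.mpr fun k _ => hfb k
  have hdq : ∀ n : ℕ, qPochN q q n ≠ 0 := fun n =>
    Finset.prod_ne_zero_iff.mpr fun k _ => hfq k
  -- the coefficient sequence
  obtain ⟨A, hA⟩ : ∃ A : ℕ → ℂ, A = fun n =>
      qPochN q a n * qPochN q (a * q / c) n / (qPochN q (a * q / b) n * qPochN q q n) :=
    ⟨_, rfl⟩
  have hrec : ∀ n : ℕ, A (n + 1)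
      = A n * ((1 - a * q ^ n) * (1 - a * q / c * q ^ n))
          / ((1 - a * q / b * q ^ n) * (1 - q * q ^ n)) := by
    intro n
    simp only [hA, qPochN, Finset.prod_range_succ]
    field_simp
  have hrecm : ∀ n : ℕ, A (n + 1) * ((b - a * q * q ^ n) * (1 - q * q ^ n)) * c
      = A n * ((1 - a * q ^ n) * (c - a * q * q ^ n)) * b := by
    intro n
    have hde : ((1 - a * q / b * q ^ n) * (1 - q * q ^ n)) ≠ 0 :=
      mul_ne_zero (hfb n) (hfq n)
    rw [hrec n, div_mul_eq_mul_div, div_mul_eq_mul_div, div_eq_iff hde]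
    field_simp
  -- summability
  have hsum : ∀ w : ℂ, ‖w‖ < 1 → Summable (fun n => A n * w ^ n) := by
    intro w hw
    set ρ : ℕ → ℂ := fun n =>
      ((1 - a * q ^ n) * (1 - a * q / c * q ^ n))
        / ((1 - a * q / b * q ^ n) * (1 - q * q ^ n)) * w with hρdef
    have hstep : ∀ n, A (n + 1) * w ^ (n + 1) = ρ n * (A n * w ^ n) := by
      intro n; rw [pow_succ, hrec n, hρdef]; ring
    have hqpow : Filter.Tendsto (fun n : ℕ => q ^ n) Filter.atTop (nhds 0) :=
      tendsto_pow_atTop_nhds_zero_of_norm_lt_one hq1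
    have h1 : Filter.Tendsto (fun n : ℕ => 1 - a * q ^ n) Filter.atTop (nhds 1) := by
      have := (tendsto_const_nhds : Filter.Tendsto (fun _ : ℕ => (1:ℂ)) Filter.atTop (nhds 1)).sub (hqpow.const_mul a)
      simpa using this
    have h2 : Filter.Tendsto (fun n : ℕ => 1 - a * q / c * q ^ n) Filter.atTop (nhds 1) := by
      have := (tendsto_const_nhds : Filter.Tendsto (fun _ : ℕ => (1:ℂ)) Filter.atTop (nhds 1)).sub (hqpow.const_mul (a * q / c))
      simpa using this
    have h3 : Filter.Tendsto (fun n : ℕ => 1 - a * q / b * q ^ n) Filter.atTop (nhds 1) := by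
      have := (tendsto_const_nhds : Filter.Tendsto (fun _ : ℕ => (1:ℂ)) Filter.atTop (nhds 1)).sub (hqpow.const_mul (a * q / b))
      simpa using this
    have h4 : Filter.Tendsto (fun n : ℕ => 1 - q * q ^ n) Filter.atTop (nhds 1) := by
      have := (tendsto_const_nhds : Filter.Tendsto (fun _ : ℕ => (1:ℂ)) Filter.atTop (nhds 1)).sub (hqpow.const_mul q)
      simpa using this
    have hρt : Filter.Tendsto ρ Filter.atTop (nhds w) := by
      have := (((h1.mul h2).div (h3.mul h4) (by norm_num)).mul_const w)
      simpa using this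
    have hρn : Filter.Tendsto (fun n => ‖ρ n‖) Filter.atTop (nhds ‖w‖) := hρt.norm
    have hw' : ‖w‖ < 1 := hw
    apply summable_of_ratio_norm_eventually_le (r := (1 + ‖w‖) / 2) (by linarith)
    have hev : ∀ᶠ n in Filter.atTop, ‖ρ n‖ ≤ (1 + ‖w‖) / 2 := by
      have : ∀ᶠ n in Filter.atTop, ‖ρ n‖ < (1 + ‖w‖) / 2 :=
        hρn.eventually_lt_const (by linarith)
      exact this.mono fun n hn => hn.le
    filter_upwards [hev] with n hn
    rw [hstep n, norm_mul]
    exact mul_le_mul_of_nonneg_right hn (norm_nonneg _)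
  -- the variable z and its size
  obtain ⟨z, hzdef⟩ : ∃ z : ℂ, z = c * q / (a * b * x) := ⟨_, rfl⟩
  have habx : a * b * x ≠ 0 := mul_ne_zero (mul_ne_zero ha0 hb0) hx0
  have hz0 : z ≠ 0 := by rw [hzdef]; exact div_ne_zero (mul_ne_zero hc0 hq) habx
  have hzabs : ‖z‖ < ‖q‖ ^ 2 := by
    have h1 : ‖c‖ / (‖a‖ * ‖b‖ * ‖q‖)
        < ‖x‖ := by
      rw [← norm_mul, ← norm_mul, ← norm_div]; exact hx
    have hpos : 0 < ‖a‖ * ‖b‖ * ‖q‖ :=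
      mul_pos (mul_pos (norm_pos_iff.mpr ha0) (norm_pos_iff.mpr hb0)) hq0
    have hxpos : 0 < ‖x‖ := norm_pos_iff.mpr hx0
    have h2 : ‖c‖ < ‖x‖ * (‖a‖ * ‖b‖ * ‖q‖) :=
      (div_lt_iff₀ hpos).mp h1
    rw [hzdef, norm_div, norm_mul, norm_mul, norm_mul]
    rw [div_lt_iff₀ (mul_pos (mul_pos (norm_pos_iff.mpr ha0) (norm_pos_iff.mpr hb0)) hxpos)]
    have hqpos : 0 < ‖q‖ := hq0
    nlinarith [norm_nonneg c, norm_nonneg q]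
  have hq2lt : ‖q‖ ^ 2 < 1 := by nlinarith
  have hs0 : Summable (fun n => A n * z ^ n) := hsum z (hzabs.trans hq2lt)
  have hs1 : Summable (fun n => A n * (z / q) ^ n) := by
    apply hsum
    rw [norm_div, div_lt_one hq0]
    nlinarith
  have hs2 : Summable (fun n => A n * (z / q ^ 2) ^ n) := by
    apply hsum
    rw [norm_div, norm_pow, div_lt_one (pow_pos hq0 2)]
    exact hzabs
  -- rewrite the phi arguments
  have harg1 : c * q / (a * b * (q * x)) = z / q := by
    rw [hzdef]; ring
  have harg2 : c * q / (a * b * (q ^ 2 * x)) = z / q ^ 2 := by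
    rw [hzdef]; ring
  -- rewrite the theta ratios
  have ht1 : theta q (a * (q * x)) / theta q (q * x)
      = a⁻¹ * (theta q (a * x) / theta q x) := theta_ratio q a x hq ha0 hx0
  have ht2 : theta q (a * (q ^ 2 * x)) / theta q (q ^ 2 * x)
      = a⁻¹ * (a⁻¹ * (theta q (a * x) / theta q x)) := by
    have e : q ^ 2 * x = q * (q * x) := by ring
    rw [e, theta_ratio q a (q * x) hq ha0 (mul_ne_zero hq hx0), ht1]
  rw [harg1, harg2, ← hzdef, ht1, ht2]
  -- phi21 as tsum of A
  have hphi : ∀ w : ℂ, phi21 q a (a * q / c) (a * q / b) w = ∑' n, A n * w ^ n := by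
    intro w; simp only [phi21, hA]
  rw [hphi, hphi, hphi]
  -- telescoping function
  obtain ⟨g, hgdef⟩ : ∃ g : ℕ → ℂ, g = fun n =>
      -(A n * (z / q ^ 2) ^ n * q * x * a⁻¹ * (b - a * q ^ n) * (1 - q ^ n)) := ⟨_, rfl⟩
  have hqn : ∀ n : ℕ, (q : ℂ) ^ n ≠ 0 := fun n => pow_ne_zero n hq
  have hgcombo : ∀ n, (-(q * x * a⁻¹ * b)) * (A n * (z / q ^ 2) ^ n)
      + ((q * x * a⁻¹ * (a + b)) * (A n * (z / q) ^ n) + (-(q * x)) * (A n * z ^ n)) = g n := by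
    intro n
    have hQ := hqn n
    have e2 : (z / q ^ 2) ^ n = z ^ n / (q ^ n) ^ 2 := by
      rw [div_pow]; congr 1; rw [← pow_mul, ← pow_mul, Nat.mul_comm]
    have e1 : (z / q) ^ n = z ^ n / q ^ n := div_pow z q n
    simp only [hgdef]
    rw [e1, e2]
    generalize z ^ n = Zn
    generalize hQg : q ^ n = Qn at hQ ⊢
    field_simp
    ring
  have hg : Summable g := by
    refine Summable.congr ?_ hgcombo
    exact (hs2.mul_left _).add ((hs1.mul_left _).add (hs0.mul_left _))
  have hg1 : Summable (fun n => g (n + 1)) := (summable_nat_add_iff 1).2 hg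
  -- key pointwise identity
  have hkey : ∀ n : ℕ,
      ((c - a * b * q * x) * (a⁻¹ * a⁻¹)) * (A n * (z / q ^ 2) ^ n)
        + ((-((c + q) - (a + b) * q * x) * a⁻¹) * (A n * (z / q) ^ n)
          + (q * (1 - x)) * (A n * z ^ n)) = g n - g (n + 1) := by
    intro n
    have hgsucc : c * g (n + 1)
        = -(A n * ((1 - a * q ^ n) * (c - a * q * q ^ n)) * b
            * ((z / q ^ 2) ^ n * (z / q ^ 2)) * q * x * a⁻¹) := by
      simp only [hgdef]
      simp only [pow_succ]
      linear_combination (-((z / q ^ 2) ^ n * (z / q ^ 2) * q * x * a⁻¹)) * hrecm n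
    refine mul_left_cancel₀ hc0 ?_
    rw [show c * (g n - g (n + 1)) = c * g n - c * g (n + 1) from mul_sub c _ _, hgsucc]
    simp only [hgdef]
    have hQ := hqn n
    have e2 : (z / q ^ 2) ^ n = z ^ n / (q ^ n) ^ 2 := by
      rw [div_pow]; congr 1; rw [← pow_mul, ← pow_mul, Nat.mul_comm]
    have e1 : (z / q) ^ n = z ^ n / q ^ n := div_pow z q n
    rw [e1, e2]
    generalize z ^ n = Zn
    generalize hQg : q ^ n = Qn at hQ ⊢
    rw [hzdef]
    have hcan : a⁻¹ ^ 2 * b⁻¹ * q⁻¹ ^ 2 * x⁻¹ * Qn⁻¹ ^ 2 * (a ^ 2 * b * q ^ 2 * x * Qn ^ 2) = 1 := by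
      field_simp
    field_simp [hQ]
    ring
  -- sum the identity
  have hfinal :
      ((c - a * b * q * x) * (a⁻¹ * a⁻¹)) * (∑' n, A n * (z / q ^ 2) ^ n)
        + ((-((c + q) - (a + b) * q * x) * a⁻¹) * (∑' n, A n * (z / q) ^ n)
          + (q * (1 - x)) * (∑' n, A n * z ^ n)) = 0 := by
    rw [← tsum_mul_left, ← tsum_mul_left, ← tsum_mul_left,
      ← Summable.tsum_add (hs1.mul_left _) (hs0.mul_left _),
      ← Summable.tsum_add (hs2.mul_left _) ((hs1.mul_left _).add (hs0.mul_left _)),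
      tsum_congr hkey, Summable.tsum_sub hg hg1, Summable.tsum_eq_zero_add hg]
    have hg0 : g 0 = 0 := by simp [hgdef]
    rw [hg0]; ring
  linear_combination (theta q (a * x) / theta q x) * hfinal
end

section
/- The divergent bilateral series ₂ψ₁ is a formal solution of the q-difference equation: Let q ∈ ℂ with 0 < |q| < 1 and let a₁, a₂, b₁ ∈ ℂ* with b₁ ∉ q^ℤ and a₁, a₂ ∉ {q^k : k ≥ 1}. Define for n ∈ ℤ the coefficients c_n = (a₁;q)_n (a₂;q)_n / (b₁;q)_n · (−1)^n q^{−n(n−1)/2}. Then for every n ∈ ℤ: (b₁/q²)·q^{2n}·c_n − (1/q)·q^n·c_n − a₁a₂·q^{2(n−1)}·c_{n−1} + (a₁+a₂)·q^{n−1}·c_{n−1} − c_{n−1} = 0. (Equivalently, the formal bilateral series u(x) = ∑_{n∈ℤ} c_n x^n satisfies (b₁/q² − a₁a₂x)u(q²x) − (1/q − (a₁+a₂)x)u(qx) − x·u(x) = 0 coefficientwise.) -/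
open scoped BigOperators

lemma fac_ne (q a : ℂ) (m : ℤ) (h : a ≠ q ^ (-m)) :
    1 - a * q ^ m ≠ 0 := by
  intro h0
  apply h
  have hm : a * q ^ m = 1 := by linear_combination -h0
  have : a = (q ^ m)⁻¹ := eq_inv_of_mul_eq_one_left hm
  rw [this, ← zpow_neg]

lemma qPochZ_step (q a : ℂ) (hq : q ≠ 0) (n : ℤ)
    (h : 1 ≤ n ∨ 1 - a * q ^ (n - 1) ≠ 0) :
    qPochZ q a n = qPochZ q a (n - 1) * (1 - a * q ^ (n - 1)) := by
  rcases le_or_gt 1 n with hn | hn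
  · have h1 : (0:ℤ) ≤ n := by omega
    have h2 : (0:ℤ) ≤ n - 1 := by omega
    simp only [qPochZ, if_pos h1, if_pos h2]
    rw [show n.toNat = (n-1).toNat + 1 by omega, Finset.prod_range_succ]
    congr 2
    rw [← zpow_natCast, Int.toNat_of_nonneg h2]
  · have hF : 1 - a * q ^ (n - 1) ≠ 0 := h.resolve_left (by omega)
    have h2 : ¬ (0:ℤ) ≤ n - 1 := by omega
    rcases eq_or_lt_of_le (show n ≤ 0 by omega) with h0 | h0
    · subst h0
      simp only [qPochZ, if_pos le_rfl, if_neg h2]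
      simp only [Int.toNat_zero, Finset.prod_range_zero]
      rw [show (-(0 - 1) : ℤ).toNat = 1 by rfl, Finset.prod_range_one]
      rw [show (-(((0:ℕ):ℤ) + 1)) = (0:ℤ) - 1 by norm_num, inv_mul_cancel₀ hF]
    · have h1 : ¬ (0:ℤ) ≤ n := by omega
      simp only [qPochZ, if_neg h1, if_neg h2]
      rw [show (-(n-1)).toNat = (-n).toNat + 1 by omega, Finset.prod_range_succ]
      have he : (-(((-n).toNat : ℤ) + 1)) = n - 1 := by omega
      rw [he, mul_inv, mul_assoc, inv_mul_cancel₀ hF, mul_one]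

lemma qPochZ_ne_zero (q b : ℂ) (hb : ∀ k : ℤ, b ≠ q ^ k) (m : ℤ) :
    qPochZ q b m ≠ 0 := by
  unfold qPochZ
  split
  · apply Finset.prod_ne_zero_iff.mpr
    intro k _
    have := fac_ne q b (k : ℤ) (hb _)
    simpa using this
  · exact inv_ne_zero (Finset.prod_ne_zero_iff.mpr fun k _ =>
      fac_ne q b _ (hb _))


/-- The divergent bilateral series `₂ψ₁` is a formal solution of the q-difference
equation, expressed coefficientwise. -/
theorem bilateral_formal_solution (q a₁ a₂ b₁ : ℂ)
    (hq0 : 0 < ‖q‖) (hq1 : ‖q‖ < 1)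
    (ha₁ : a₁ ≠ 0) (ha₂ : a₂ ≠ 0) (hb₁ : b₁ ≠ 0)
    (hbq : ∀ k : ℤ, b₁ ≠ q ^ k)
    (ha₁q : ∀ k : ℕ, 1 ≤ k → a₁ ≠ q ^ k)
    (ha₂q : ∀ k : ℕ, 1 ≤ k → a₂ ≠ q ^ k)
    (c : ℤ → ℂ)
    (hc : ∀ n : ℤ, c n = qPochZ q a₁ n * qPochZ q a₂ n / qPochZ q b₁ n *
      (-1) ^ n * q ^ (-(n * (n - 1) / 2))) :
    ∀ n : ℤ,
      (b₁ / q ^ 2) * q ^ (2 * n) * c n - (1 / q) * q ^ n * c n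
        - a₁ * a₂ * q ^ (2 * (n - 1)) * c (n - 1)
        + (a₁ + a₂) * q ^ (n - 1) * c (n - 1) - c (n - 1) = 0 := by
  intro n
  have hq : q ≠ 0 := by intro h; simp [h] at hq0
  have hC : qPochZ q b₁ (n - 1) ≠ 0 := qPochZ_ne_zero q b₁ hbq _
  have hF3 : 1 - b₁ * q ^ (n - 1) ≠ 0 := fac_ne q b₁ (n - 1) (hbq _)
  have hF1 : 1 ≤ n ∨ 1 - a₁ * q ^ (n - 1) ≠ 0 := by
    rcases le_or_gt 1 n with hn | hn
    · exact Or.inl hn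
    · refine Or.inr (fac_ne q a₁ (n - 1) ?_)
      have h := ha₁q (1 - n).toNat (by omega)
      rwa [show (-(n-1):ℤ) = (((1-n).toNat : ℕ) : ℤ) by omega, zpow_natCast]
  have hF2 : 1 ≤ n ∨ 1 - a₂ * q ^ (n - 1) ≠ 0 := by
    rcases le_or_gt 1 n with hn | hn
    · exact Or.inl hn
    · refine Or.inr (fac_ne q a₂ (n - 1) ?_)
      have h := ha₂q (1 - n).toNat (by omega)
      rwa [show (-(n-1):ℤ) = (((1-n).toNat : ℕ) : ℤ) by omega, zpow_natCast]
  have hsplit : (-(n * (n - 1) / 2) : ℤ) = (-((n-1) * (n - 1 - 1) / 2)) + (-(n-1)) := by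
    obtain ⟨m, hm⟩ := Int.even_mul_succ_self (n - 2)
    have hr : n * (n - 1) = (n - 2) * (n - 2 + 1) + 2 * (n - 1) := by ring
    have hr2 : (n - 1) * (n - 1 - 1) = (n - 2) * (n - 2 + 1) := by ring
    omega
  have hneg : ((-1 : ℂ)) ^ n = (-1) ^ (n - 1) * (-1) := by
    rw [← zpow_add_one₀ (by norm_num : (-1:ℂ) ≠ 0)]
    congr 1; ring
  have e1 : q ^ (2 * n) = q ^ (n-1) * q ^ (n-1) * q * q := by
    rw [show (2*n : ℤ) = (n-1) + (n-1) + 1 + 1 by ring, zpow_add₀ hq, zpow_add₀ hq,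
      zpow_add₀ hq, zpow_one]
  have e2 : q ^ n = q ^ (n-1) * q := by
    rw [← zpow_add_one₀ hq, sub_add_cancel]
  have e3 : q ^ (2 * (n-1)) = q ^ (n-1) * q ^ (n-1) := by
    rw [show (2*(n-1) : ℤ) = (n-1) + (n-1) by ring, zpow_add₀ hq]
  have hQ : q ^ (n - 1) ≠ 0 := zpow_ne_zero _ hq
  have hkey : (1 - b₁ * q ^ (n-1)) * q ^ (n-1) * c n
      = -(1 - a₁ * q ^ (n-1)) * (1 - a₂ * q ^ (n-1)) * c (n-1) := by
    rw [hc n, hc (n-1), qPochZ_step q a₁ hq n hF1, qPochZ_step q a₂ hq n hF2,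
      qPochZ_step q b₁ hq n (Or.inr hF3), hsplit, zpow_add₀ hq, hneg,
      show q ^ (-(n-1) : ℤ) = (q ^ (n-1 : ℤ))⁻¹ from zpow_neg q (n-1)]
    have hE : q ^ ((n-1) * (n - 1 - 1) / 2 : ℤ) ≠ 0 := zpow_ne_zero _ hq
    field_simp [hq, hC, hF3, hQ, hE]
  rw [e1, e2, e3,
    show b₁ / q ^ 2 * (q ^ (n-1) * q ^ (n-1) * q * q) = b₁ * (q ^ (n-1) * q ^ (n-1)) from by
      field_simp,
    show 1 / q * (q ^ (n-1) * q) = q ^ (n-1) from by field_simp]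
  linear_combination -hkey
end

section
/- The function v₁ is an actual solution at infinity: Let q ∈ ℂ with 0 < |q| < 1 and let a₁, a₂, b₁ ∈ ℂ* with qa₁/a₂ ∉ {q^{−m} : m ≥ 0}. Define v₁(x) = (θ_q(a₁x)/θ_q(x)) · ∑_{n≥0} (qa₁/b₁;q)_n (b₁/(a₁a₂x))^n / ((qa₁/a₂;q)_n (q;q)_n). Then for every x ∈ ℂ with |x| > |b₁/(a₁a₂q²)| and x ∉ −q^ℤ: (b₁/q² − a₁a₂x)·v₁(q²x) − (1/q − (a₁+a₂)x)·v₁(qx) − x·v₁(x) = 0. -/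
set_option maxHeartbeats 1000000


open scoped BigOperators

/-- The unilateral solution around infinity. -/
noncomputable def vSol (q a₁ a₂ b₁ x : ℂ) : ℂ :=
  (theta q (a₁ * x) / theta q x) *
    ∑' n : ℕ, qPochN q (q * a₁ / b₁) n * (b₁ / (a₁ * a₂ * x)) ^ n /
      (qPochN q (q * a₁ / a₂) n * qPochN q q n)

/- ### theta lemmas -/

lemma half_shift (n : ℤ) : n * (n - 1) / 2 + n = (n + 1) * (n + 1 - 1) / 2 := by
  obtain ⟨k, hk⟩ : Even (n * (n - 1)) := by
    rcases Int.even_or_odd n with h | h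
    · exact h.mul_right (n - 1)
    · exact (h.sub_odd odd_one).mul_left n
  have h2 : (n + 1) * (n + 1 - 1) = n * (n - 1) + 2 * n := by ring
  rw [h2, hk]
  omega

lemma theta_shift (q x : ℂ) (hq : q ≠ 0) (hx : x ≠ 0) :
    theta q (q * x) = theta q x / x := by
  have h : x * theta q (q * x) = theta q x := by
    rw [theta, theta, ← tsum_mul_left,
      ← (Equiv.addRight (1 : ℤ)).tsum_eq (fun n => q ^ (n * (n - 1) / 2) * x ^ n)]
    congr 1
    funext n
    simp only [Equiv.coe_addRight]
    have : x * (q ^ (n * (n - 1) / 2) * (q * x) ^ n)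
        = q ^ (n * (n - 1) / 2 + n) * x ^ (n + 1) := by
      rw [mul_zpow, zpow_add₀ hq, zpow_add₀ hx, zpow_one]
      ring
    rw [this, half_shift]
  rw [eq_div_iff hx, mul_comm]
  exact h

lemma theta_ratio_shift (q a₁ y : ℂ) (hq : q ≠ 0) (ha₁ : a₁ ≠ 0) (hy : y ≠ 0) :
    theta q (a₁ * (q * y)) / theta q (q * y) = theta q (a₁ * y) / theta q y / a₁ := by
  have h1 : a₁ * (q * y) = q * (a₁ * y) := by ring
  rw [h1, theta_shift q (a₁ * y) hq (mul_ne_zero ha₁ hy), theta_shift q y hq hy,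
    div_div_div_comm, mul_div_assoc, div_self hy, mul_one]

/- ### q-Pochhammer lemmas -/

lemma qPochN_succ (q a : ℂ) (n : ℕ) :
    qPochN q a (n + 1) = qPochN q a n * (1 - a * q ^ n) := by
  simp [qPochN, Finset.prod_range_succ]

lemma one_sub_q_pow_ne (q : ℂ) (hq1 : ‖q‖ < 1) (k : ℕ) :
    (1 : ℂ) - q * q ^ k ≠ 0 := by
  intro h
  have h1 : q * q ^ k = 1 := by linear_combination -h
  have : ‖q * q ^ k‖ < 1 := by
    rw [norm_mul, norm_pow]
    calc ‖q‖ * ‖q‖ ^ k ≤ ‖q‖ * 1 := by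
          exact mul_le_mul_of_nonneg_left (pow_le_one₀ (norm_nonneg q) hq1.le)
            (norm_nonneg q)
      _ < 1 := by rw [mul_one]; exact hq1
  rw [h1] at this; simp at this

lemma qPochN_q_ne (q : ℂ) (hq1 : ‖q‖ < 1) (n : ℕ) : qPochN q q n ≠ 0 := by
  rw [qPochN]
  exact Finset.prod_ne_zero_iff.2 fun k _ => one_sub_q_pow_ne q hq1 k

lemma one_sub_beta_ne (q a₁ a₂ : ℂ) (hq : q ≠ 0)
    (haa : ∀ m : ℕ, q * a₁ / a₂ ≠ q ^ (-(m : ℤ))) (k : ℕ) :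
    (1 : ℂ) - (q * a₁ / a₂) * q ^ k ≠ 0 := by
  intro h
  apply haa k
  have hqk : (q : ℂ) ^ k ≠ 0 := pow_ne_zero k hq
  have h1 : (q * a₁ / a₂) * q ^ k = 1 := by linear_combination -h
  rw [zpow_neg, zpow_natCast]
  field_simp
  linear_combination h1

lemma qPochN_beta_ne (q a₁ a₂ : ℂ) (hq : q ≠ 0)
    (haa : ∀ m : ℕ, q * a₁ / a₂ ≠ q ^ (-(m : ℤ))) (n : ℕ) :
    qPochN q (q * a₁ / a₂) n ≠ 0 := by
  rw [qPochN]
  exact Finset.prod_ne_zero_iff.2 fun k _ => one_sub_beta_ne q a₁ a₂ hq haa k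

/- ### the coefficient sequence -/

noncomputable def cSeq (q a₁ a₂ b₁ : ℂ) (n : ℕ) : ℂ :=
  qPochN q (q * a₁ / b₁) n / (qPochN q (q * a₁ / a₂) n * qPochN q q n)

lemma cSeq_succ (q a₁ a₂ b₁ : ℂ) (hq : q ≠ 0) (hq1 : ‖q‖ < 1)
    (haa : ∀ m : ℕ, q * a₁ / a₂ ≠ q ^ (-(m : ℤ))) (n : ℕ) :
    cSeq q a₁ a₂ b₁ (n + 1) = cSeq q a₁ a₂ b₁ n *
      ((1 - (q * a₁ / b₁) * q ^ n) / ((1 - (q * a₁ / a₂) * q ^ n) * (1 - q * q ^ n))) := by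
  have hB := qPochN_beta_ne q a₁ a₂ hq haa n
  have hC := qPochN_q_ne q hq1 n
  have hb := one_sub_beta_ne q a₁ a₂ hq haa n
  have hc := one_sub_q_pow_ne q hq1 n
  simp only [cSeq, qPochN_succ]
  generalize qPochN q (q * a₁ / b₁) n = A
  generalize hBe : qPochN q (q * a₁ / a₂) n = B at hB ⊢
  generalize hCe : qPochN q q n = C at hC ⊢
  field_simp

lemma summable_c (q a₁ a₂ b₁ : ℂ) (hq : q ≠ 0) (hq1 : ‖q‖ < 1)
    (haa : ∀ m : ℕ, q * a₁ / a₂ ≠ q ^ (-(m : ℤ))) (r : ℂ) (hr : ‖r‖ < 1) :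
    Summable (fun n : ℕ => cSeq q a₁ a₂ b₁ n * r ^ n) := by
  set f : ℕ → ℂ := fun n => cSeq q a₁ a₂ b₁ n * r ^ n with hf
  set w : ℕ → ℂ := fun n =>
    r * (1 - (q * a₁ / b₁) * q ^ n) / ((1 - (q * a₁ / a₂) * q ^ n) * (1 - q * q ^ n)) with hw
  have hrec : ∀ n, f (n + 1) = f n * w n := by
    intro n
    simp only [hf, hw, cSeq_succ q a₁ a₂ b₁ hq hq1 haa n, pow_succ]
    ring
  have hq0' : Filter.Tendsto (fun n : ℕ => (q : ℂ) ^ n) Filter.atTop (nhds 0) :=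
    tendsto_pow_atTop_nhds_zero_of_norm_lt_one hq1
  have hwlim : Filter.Tendsto w Filter.atTop (nhds r) := by
    have h1 : Filter.Tendsto (fun n : ℕ => r * (1 - (q * a₁ / b₁) * q ^ n))
        Filter.atTop (nhds (r * (1 - (q * a₁ / b₁) * 0))) :=
      Filter.Tendsto.const_mul r (tendsto_const_nhds.sub ((hq0').const_mul _))
    have h2 : Filter.Tendsto (fun n : ℕ => (1 - (q * a₁ / a₂) * q ^ n) * (1 - q * q ^ n))
        Filter.atTop (nhds ((1 - (q * a₁ / a₂) * 0) * (1 - q * 0))) :=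
      (tendsto_const_nhds.sub ((hq0').const_mul _)).mul
        (tendsto_const_nhds.sub ((hq0').const_mul _))
    have := h1.div h2 (by norm_num)
    simp at this; exact this
  have hnorm : Filter.Tendsto (fun n => ‖w n‖) Filter.atTop (nhds ‖r‖) := hwlim.norm
  set ρ : ℝ := (‖r‖ + 1) / 2 with hρ
  have hρ1 : ρ < 1 := by rw [hρ, div_lt_one (by norm_num)]; linarith
  have hrρ : ‖r‖ < ρ := by
    rw [hρ, lt_div_iff₀ (by norm_num : (0:ℝ) < 2)]; linarith
  have hev : ∀ᶠ n in Filter.atTop, ‖w n‖ < ρ := hnorm.eventually_lt_const hrρ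
  apply summable_of_ratio_norm_eventually_le hρ1
  filter_upwards [hev] with n hn
  rw [hrec n, norm_mul, mul_comm ρ]
  exact mul_le_mul_of_nonneg_left hn.le (norm_nonneg _)

lemma telescope_id (q a₁ a₂ x t C T P : ℂ) (hq : q ≠ 0) (ha₁ : a₁ ≠ 0) (ha₂ : a₂ ≠ 0)
    (hx : x ≠ 0) (ht : t ≠ 0) (hP : P ≠ 0)
    (hb2 : a₂ - q * a₁ * P ≠ 0) (hcn : 1 - q * P ≠ 0) :
    (t * (a₁ * a₂ * x) / q ^ 2 - a₁ * a₂ * x) * (C * (T / P ^ 2))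
      - a₁ * (1 / q - (a₁ + a₂) * x) * (C * (T / P))
      - a₁ ^ 2 * x * (C * T)
    = a₁ * x * (C * ((t * (a₁ * a₂ * x) - q * a₁ * P) * a₂ /
          ((a₂ - q * a₁ * P) * (1 - q * P) * (t * (a₁ * a₂ * x)))) *
        (a₂ * (T / P ^ 2 * (t / q ^ 2)) - (a₁ + a₂) * (T / P * (t / q)) + a₁ * (T * t)))
      - a₁ * x * (C * (a₂ * (T / P ^ 2) - (a₁ + a₂) * (T / P) + a₁ * T)) := by
  have htx : t * (a₁ * a₂ * x) ≠ 0 := mul_ne_zero ht (mul_ne_zero (mul_ne_zero ha₁ ha₂) hx)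
  have hDen : (a₂ - q * a₁ * P) * (1 - q * P) * (t * (a₁ * a₂ * x)) ≠ 0 :=
    mul_ne_zero (mul_ne_zero hb2 hcn) htx
  have hre : a₁ * x * (C * ((t * (a₁ * a₂ * x) - q * a₁ * P) * a₂ /
          ((a₂ - q * a₁ * P) * (1 - q * P) * (t * (a₁ * a₂ * x)))) *
        (a₂ * (T / P ^ 2 * (t / q ^ 2)) - (a₁ + a₂) * (T / P * (t / q)) + a₁ * (T * t)))
      = a₁ * x * C * ((t * (a₁ * a₂ * x) - q * a₁ * P) * a₂) *
        (a₂ * (T / P ^ 2 * (t / q ^ 2)) - (a₁ + a₂) * (T / P * (t / q)) + a₁ * (T * t))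
        / ((a₂ - q * a₁ * P) * (1 - q * P) * (t * (a₁ * a₂ * x))) := by
    ring
  rw [eq_sub_iff_add_eq, hre, eq_div_iff hDen]
  field_simp
  ring

lemma cSeq_succ' (q a₁ a₂ b₁ : ℂ) (hq : q ≠ 0) (hq1 : ‖q‖ < 1)
    (haa : ∀ m : ℕ, q * a₁ / a₂ ≠ q ^ (-(m : ℤ))) (ha₂ : a₂ ≠ 0) (hb₁ : b₁ ≠ 0) (n : ℕ) :
    cSeq q a₁ a₂ b₁ (n + 1) = cSeq q a₁ a₂ b₁ n *
      ((b₁ - q * a₁ * q ^ n) * a₂ / ((a₂ - q * a₁ * q ^ n) * (1 - q * q ^ n) * b₁)) := by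
  have hb := one_sub_beta_ne q a₁ a₂ hq haa n
  have hcn := one_sub_q_pow_ne q hq1 n
  have hb2 : a₂ - q * a₁ * q ^ n ≠ 0 := by
    have h : a₂ - q * a₁ * q ^ n = a₂ * (1 - q * a₁ / a₂ * q ^ n) := by
      field_simp
    rw [h]
    exact mul_ne_zero ha₂ hb
  rw [cSeq_succ q a₁ a₂ b₁ hq hq1 haa n]
  congr 1
  rw [div_eq_div_iff (mul_ne_zero hb hcn) (mul_ne_zero (mul_ne_zero hb2 hcn) hb₁)]
  field_simp

lemma vSol_eq (q a₁ a₂ b₁ y : ℂ) :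
    vSol q a₁ a₂ b₁ y = (theta q (a₁ * y) / theta q y) *
      ∑' n : ℕ, cSeq q a₁ a₂ b₁ n * (b₁ / (a₁ * a₂ * y)) ^ n := by
  rw [vSol]
  congr 1
  exact tsum_congr fun n => mul_div_right_comm _ _ _


/-- `v₁` is an actual solution of the q-difference equation near infinity. -/
theorem v1_solution_at_infinity (q a₁ a₂ b₁ : ℂ)
    (hq0 : 0 < ‖q‖) (hq1 : ‖q‖ < 1)
    (ha₁ : a₁ ≠ 0) (ha₂ : a₂ ≠ 0) (hb₁ : b₁ ≠ 0)
    (haa : ∀ m : ℕ, q * a₁ / a₂ ≠ q ^ (-(m : ℤ))) :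
    ∀ x : ℂ, ‖b₁ / (a₁ * a₂ * q ^ 2)‖ < ‖x‖ → (∀ k : ℤ, x ≠ -q ^ k) →
      (b₁ / q ^ 2 - a₁ * a₂ * x) * vSol q a₁ a₂ b₁ (q ^ 2 * x)
        - (1 / q - (a₁ + a₂) * x) * vSol q a₁ a₂ b₁ (q * x)
        - x * vSol q a₁ a₂ b₁ x = 0 := by
  intro x hxabs hxq
  have hq : q ≠ 0 := by
    intro h; rw [h] at hq0; simp at hq0
  have hx0 : x ≠ 0 := by
    intro h; rw [h, norm_zero] at hxabs
    exact absurd hxabs (not_lt.2 (norm_nonneg _))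
  -- rewrite vSol
  rw [vSol_eq, vSol_eq, vSol_eq]
  have harg1 : b₁ / (a₁ * a₂ * (q * x)) = b₁ / (a₁ * a₂ * x) / q := by
    rw [div_div]; ring_nf
  have harg2 : b₁ / (a₁ * a₂ * (q ^ 2 * x)) = b₁ / (a₁ * a₂ * x) / q ^ 2 := by
    rw [div_div]; ring_nf
  rw [harg1, harg2]
  have hΘ1 : theta q (a₁ * (q * x)) / theta q (q * x)
      = theta q (a₁ * x) / theta q x / a₁ := theta_ratio_shift q a₁ x hq ha₁ hx0
  have hq2x : q ^ 2 * x = q * (q * x) := by ring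
  have hΘ2 : theta q (a₁ * (q ^ 2 * x)) / theta q (q ^ 2 * x)
      = theta q (a₁ * x) / theta q x / a₁ / a₁ := by
    rw [hq2x, theta_ratio_shift q a₁ (q * x) hq ha₁ (mul_ne_zero hq hx0), hΘ1]
  rw [hΘ1, hΘ2]
  set Θ : ℂ := theta q (a₁ * x) / theta q x with hΘ
  set t : ℂ := b₁ / (a₁ * a₂ * x) with ht
  set c : ℕ → ℂ := cSeq q a₁ a₂ b₁ with hc
  -- absolute value bounds
  have ht0' : t ≠ 0 := by
    rw [ht]; exact div_ne_zero hb₁ (mul_ne_zero (mul_ne_zero ha₁ ha₂) hx0)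
  have ht2 : ‖t / q ^ 2‖ < 1 := by
    have he : t / q ^ 2 = b₁ / (a₁ * a₂ * q ^ 2) / x := by
      rw [ht, div_div, div_div]; ring_nf
    rw [he, norm_div, div_lt_one (norm_pos_iff.2 hx0)]
    exact hxabs
  have ht1 : ‖t / q‖ < 1 := by
    have he : t / q = t / q ^ 2 * q := by field_simp
    rw [he, norm_mul]
    calc ‖t / q ^ 2‖ * ‖q‖
        ≤ ‖t / q ^ 2‖ * 1 :=
          mul_le_mul_of_nonneg_left hq1.le (norm_nonneg _)
      _ = ‖t / q ^ 2‖ := mul_one _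
      _ < 1 := ht2
  have htt : ‖t‖ < 1 := by
    have he : t = t / q * q := by field_simp
    rw [he, norm_mul]
    calc ‖t / q‖ * ‖q‖
        ≤ ‖t / q‖ * 1 :=
          mul_le_mul_of_nonneg_left hq1.le (norm_nonneg _)
      _ = ‖t / q‖ := mul_one _
      _ < 1 := ht1
  -- summability
  have hs0 : Summable (fun n : ℕ => c n * t ^ n) :=
    summable_c q a₁ a₂ b₁ hq hq1 haa t htt
  have hs1 : Summable (fun n : ℕ => c n * (t / q) ^ n) :=
    summable_c q a₁ a₂ b₁ hq hq1 haa (t / q) ht1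
  have hs2 : Summable (fun n : ℕ => c n * (t / q ^ 2) ^ n) :=
    summable_c q a₁ a₂ b₁ hq hq1 haa (t / q ^ 2) ht2
  -- the key identity on the series
  have key : (b₁ / q ^ 2 - a₁ * a₂ * x) * ∑' n : ℕ, c n * (t / q ^ 2) ^ n
      - a₁ * (1 / q - (a₁ + a₂) * x) * ∑' n : ℕ, c n * (t / q) ^ n
      - a₁ ^ 2 * x * ∑' n : ℕ, c n * t ^ n = 0 := by
    rw [← tsum_mul_left, ← tsum_mul_left, ← tsum_mul_left,
      ← Summable.tsum_sub (hs2.mul_left _) (hs1.mul_left _),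
      ← Summable.tsum_sub ((hs2.mul_left _).sub (hs1.mul_left _)) (hs0.mul_left _)]
    set D : ℕ → ℂ := fun n =>
      a₁ * x * (c n * (a₂ * (t / q ^ 2) ^ n - (a₁ + a₂) * (t / q) ^ n + a₁ * t ^ n)) with hD
    have hgd : ∀ n : ℕ,
        (b₁ / q ^ 2 - a₁ * a₂ * x) * (c n * (t / q ^ 2) ^ n)
          - a₁ * (1 / q - (a₁ + a₂) * x) * (c n * (t / q) ^ n)
          - a₁ ^ 2 * x * (c n * t ^ n) = D (n + 1) - D n := by
      intro n
      have hb := one_sub_beta_ne q a₁ a₂ hq haa n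
      have hcn := one_sub_q_pow_ne q hq1 n
      have hp : (q : ℂ) ^ n ≠ 0 := pow_ne_zero n hq
      have hb2 : a₂ - q * a₁ * q ^ n ≠ 0 := by
        have h : a₂ - q * a₁ * q ^ n = a₂ * (1 - q * a₁ / a₂ * q ^ n) := by
          field_simp
        rw [h]
        exact mul_ne_zero ha₂ hb
      have e2 : (t / q ^ 2) ^ n = t ^ n / (q ^ n) ^ 2 := by
        rw [div_pow, ← pow_mul, ← pow_mul, Nat.mul_comm]
      have e1 : (t / q) ^ n = t ^ n / q ^ n := div_pow t q n
      have htb : b₁ = t * (a₁ * a₂ * x) := by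
        rw [ht, div_mul_cancel₀]
        exact mul_ne_zero (mul_ne_zero ha₁ ha₂) hx0
      simp only [hD, hc]
      rw [cSeq_succ' q a₁ a₂ b₁ hq hq1 haa ha₂ hb₁ n, pow_succ (t / q ^ 2), pow_succ (t / q),
        pow_succ t, e2, e1, htb]
      exact telescope_id q a₁ a₂ x t (cSeq q a₁ a₂ (t * (a₁ * a₂ * x)) n) (t ^ n) (q ^ n)
        hq ha₁ ha₂ hx0 ht0' hp hb2 hcn
    -- telescoping
    have hg : Summable (fun n : ℕ =>
        (b₁ / q ^ 2 - a₁ * a₂ * x) * (c n * (t / q ^ 2) ^ n)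
          - a₁ * (1 / q - (a₁ + a₂) * x) * (c n * (t / q) ^ n)
          - a₁ ^ 2 * x * (c n * t ^ n)) :=
      ((hs2.mul_left _).sub (hs1.mul_left _)).sub (hs0.mul_left _)
    have hD0 : D 0 = 0 := by
      simp only [hD, pow_zero]
      ring
    have hDlim : Filter.Tendsto D Filter.atTop (nhds 0) := by
      have l0 := hs0.tendsto_atTop_zero
      have l1 := hs1.tendsto_atTop_zero
      have l2 := hs2.tendsto_atTop_zero
      have hcomb : Filter.Tendsto (fun n : ℕ =>
          a₁ * x * (a₂ * (c n * (t / q ^ 2) ^ n) - (a₁ + a₂) * (c n * (t / q) ^ n)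
            + a₁ * (c n * t ^ n))) Filter.atTop
          (nhds (a₁ * x * (a₂ * 0 - (a₁ + a₂) * 0 + a₁ * 0))) :=
        (((l2.const_mul a₂).sub (l1.const_mul (a₁ + a₂))).add
          (l0.const_mul a₁)).const_mul (a₁ * x)
      have hDeq : D = fun n : ℕ =>
          a₁ * x * (a₂ * (c n * (t / q ^ 2) ^ n) - (a₁ + a₂) * (c n * (t / q) ^ n)
            + a₁ * (c n * t ^ n)) := funext fun n => by rw [hD]; ring
      rw [hDeq]
      simpa using hcomb
    have hps := hg.hasSum.tendsto_sum_nat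
    have hps2 : (fun N : ℕ => ∑ n ∈ Finset.range N,
        ((b₁ / q ^ 2 - a₁ * a₂ * x) * (c n * (t / q ^ 2) ^ n)
          - a₁ * (1 / q - (a₁ + a₂) * x) * (c n * (t / q) ^ n)
          - a₁ ^ 2 * x * (c n * t ^ n))) = fun N : ℕ => D N - D 0 := by
      funext N
      rw [Finset.sum_congr rfl (fun n _ => hgd n), Finset.sum_range_sub]
    rw [hps2, hD0] at hps
    simp only [sub_zero] at hps
    exact tendsto_nhds_unique hps hDlim
  -- conclude
  set S0 : ℂ := ∑' n : ℕ, c n * t ^ n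
  set S1 : ℂ := ∑' n : ℕ, c n * (t / q) ^ n
  set S2 : ℂ := ∑' n : ℕ, c n * (t / q ^ 2) ^ n
  have expand : (b₁ / q ^ 2 - a₁ * a₂ * x) * (Θ / a₁ / a₁ * S2)
      - (1 / q - (a₁ + a₂) * x) * (Θ / a₁ * S1) - x * (Θ * S0)
      = Θ / a₁ ^ 2 * ((b₁ / q ^ 2 - a₁ * a₂ * x) * S2
        - a₁ * (1 / q - (a₁ + a₂) * x) * S1 - a₁ ^ 2 * x * S0) := by
    field_simp
  rw [expand, key, mul_zero]
end
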